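/- Let h > 0, x ∈ ℝ, and let g : ℝ → ℝ be three times continuously differentiable on the interval [x − 3h/2, x + 3h/2], with M = sup over [x − 3h/2, x + 3h/2] of |g‴|. Define v(y) = (1/h) ∫_{y−h/2}^{y+h/2} g(ξ) dξ. Then |(−(1/6) v(x − h) + (5/6) v(x) + (1/3) v(x + h)) − g(x + h/2)| ≤ (1/6) M h³. -/

import Mathlib

open MeasureTheory intervalIntegral

private lemma idw_nhds {n : ℕ} {f : ℝ → ℝ} {s : Set ℝ} {y : ℝ} (hs : s ∈ nhds y) :
    iteratedDerivWithin n f s y = iteratedDeriv n f y := by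
  rw [← iteratedDerivWithin_univ]
  simp only [iteratedDerivWithin_eq_iteratedFDerivWithin]
  rw [← Set.univ_inter s, iteratedFDerivWithin_inter hs]

private lemma diffAt_iter {f : ℝ → ℝ} {y : ℝ} (hf : ContDiffAt ℝ 3 f y) (k : ℕ) (hk : k < 3) :
    DifferentiableAt ℝ (iteratedDeriv k f) y := by
  obtain ⟨u, hu, hfu⟩ := hf.contDiffOn le_rfl (by simp)
  have hyv : y ∈ interior u := mem_interior_iff_mem_nhds.mpr hu
  have hv : ContDiffOn ℝ 3 f (interior u) := hfu.mono interior_subset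
  have hdo : DifferentiableOn ℝ (iteratedDerivWithin k f (interior u)) (interior u) :=
    hv.differentiableOn_iteratedDerivWithin (by exact_mod_cast hk) isOpen_interior.uniqueDiffOn
  have h1 : DifferentiableAt ℝ (iteratedDerivWithin k f (interior u)) y :=
    (hdo y hyv).differentiableAt (isOpen_interior.mem_nhds hyv)
  refine h1.congr_of_eventuallyEq ?_
  filter_upwards [isOpen_interior.mem_nhds hyv] with z hz
  exact (idw_nhds (isOpen_interior.mem_nhds hz)).symm

private lemma idw_left {f : ℝ → ℝ} {c d : ℝ} (hcd : c < d) (hf : ContDiffAt ℝ 3 f c) :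
    ∀ k, k ≤ 2 → iteratedDerivWithin k f (Set.Icc c d) c = iteratedDeriv k f c := by
  intro k
  induction k with
  | zero => intro _; simp [iteratedDerivWithin_zero]
  | succ k ih =>
    intro hk
    have ihk := ih (by omega)
    have hu : UniqueDiffWithinAt ℝ (Set.Icc c d) c :=
      (uniqueDiffOn_Icc hcd) c (Set.left_mem_Icc.mpr hcd.le)
    rw [iteratedDerivWithin_succ]
    have heq : iteratedDerivWithin k f (Set.Icc c d) =ᶠ[nhdsWithin c (Set.Icc c d)]
        iteratedDeriv k f := by
      filter_upwards [nhdsWithin_le_nhds (Iio_mem_nhds hcd), self_mem_nhdsWithin] with z hz1 hz2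
      rcases eq_or_lt_of_le hz2.1 with hzc | hzc
      · rw [← hzc]; exact ihk
      · exact idw_nhds (Icc_mem_nhds hzc hz1)
    rw [Filter.EventuallyEq.derivWithin_eq heq ihk,
      DifferentiableAt.derivWithin (diffAt_iter hf k (by omega)) hu, ← iteratedDeriv_succ]

private lemma iter_reflect (n : ℕ) (g : ℝ → ℝ) (d : ℝ) :
    ∀ t, iteratedDeriv n (fun s => g (d - s)) t = (-1 : ℝ) ^ n * iteratedDeriv n g (d - t) := by
  induction n with
  | zero => intro t; simp
  | succ n ih =>
    intro t
    rw [iteratedDeriv_succ,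
      show iteratedDeriv n (fun s => g (d - s)) = fun t => (-1 : ℝ) ^ n * iteratedDeriv n g (d - t)
        from funext ih,
      deriv_const_mul_field']
    simp only [deriv_comp_const_sub, ← iteratedDeriv_succ]
    ring

private lemma taylor_pt {g : ℝ → ℝ} {a b c M : ℝ} (hac : a < c) (hcb : c < b)
    (hg : ContDiffOn ℝ 3 g (Set.Icc a b))
    (hM : ∀ y ∈ Set.Icc a b, |iteratedDerivWithin 3 g (Set.Icc a b) y| ≤ M)
    {ξ : ℝ} (hξ : ξ ∈ Set.Icc a b) :
    |g ξ - (g c + deriv g c * (ξ - c) + iteratedDeriv 2 g c / 2 * (ξ - c) ^ 2)|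
      ≤ M * |ξ - c| ^ 3 / 6 := by
  have hc : c ∈ Set.Ioo a b := ⟨hac, hcb⟩
  have hξ1 : a ≤ ξ := hξ.1
  have hξ2 : ξ ≤ b := hξ.2
  have hM3 : ∀ z ∈ Set.Ioo a b, |iteratedDeriv 3 g z| ≤ M := by
    intro z hz
    rw [← idw_nhds (Icc_mem_nhds hz.1 hz.2)]
    exact hM z (Set.Ioo_subset_Icc_self hz)
  have hCA : ∀ z ∈ Set.Ioo a b, ContDiffAt ℝ 3 g z := fun z hz =>
    hg.contDiffAt (Icc_mem_nhds hz.1 hz.2)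
  have hM0 : 0 ≤ M := le_trans (abs_nonneg _) (hM c (Set.Ioo_subset_Icc_self hc))
  rcases lt_trichotomy ξ c with hlt | heq | hgt
  · -- reflection case: ξ < c
    have key : ∀ (n : ℕ) (t : ℝ), iteratedDeriv n (fun s => g (2 * c - s)) t
        = (-1 : ℝ) ^ n * iteratedDeriv n g (2 * c - t) := fun n => iter_reflect n g (2 * c)
    have hfCA : ∀ t : ℝ, 2 * c - t ∈ Set.Ioo a b →
        ContDiffAt ℝ 3 (fun s => g (2 * c - s)) t := by
      intro t ht
      exact (hCA _ ht).comp t ((contDiff_const.sub contDiff_id).contDiffAt)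
    have hξ'c : c < 2 * c - ξ := by linarith
    have hmap : Set.MapsTo (fun t => 2 * c - t) (Set.Icc c (2 * c - ξ)) (Set.Icc a b) := by
      intro t ht
      have h1 : c ≤ t := ht.1
      have h2 : t ≤ 2 * c - ξ := ht.2
      show 2 * c - t ∈ Set.Icc a b
      exact ⟨by linarith, by linarith⟩
    have h2 : ContDiffOn ℝ 2 (fun s => g (2 * c - s)) (Set.Icc c (2 * c - ξ)) :=
      (hg.of_le (by norm_num)).comp ((contDiff_const.sub contDiff_id).contDiffOn) hmap
    have hf' : DifferentiableOn ℝ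
        (iteratedDerivWithin 2 (fun s => g (2 * c - s)) (Set.Icc c (2 * c - ξ)))
        (Set.Ioo c (2 * c - ξ)) := by
      intro y hy
      have hyr : 2 * c - y ∈ Set.Ioo a b := ⟨by linarith [hy.2], by linarith [hy.1]⟩
      have h1 := diffAt_iter (hfCA y hyr) 2 (by norm_num)
      refine (h1.congr_of_eventuallyEq ?_).differentiableWithinAt
      filter_upwards [Ioo_mem_nhds hy.1 hy.2] with z hz
      exact idw_nhds (Icc_mem_nhds hz.1 hz.2)
    obtain ⟨x', hx', hEq⟩ := taylor_mean_remainder_lagrange (n := 2) hξ'c.ne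
      (by rw [Set.uIcc_of_le hξ'c.le]; exact_mod_cast h2)
      (by rw [Set.uIcc_of_le hξ'c.le, Set.uIoo_of_le hξ'c.le]; exact hf')
    rw [Set.uIcc_of_le hξ'c.le] at hEq
    rw [Set.uIoo_of_le hξ'c.le] at hx'
    have hfc : ContDiffAt ℝ 3 (fun s => g (2 * c - s)) c := by
      apply hfCA c
      rw [show 2 * c - c = c by ring]
      exact hc
    have e1 := idw_left hξ'c hfc 1 (by norm_num)
    have e2 := idw_left hξ'c hfc 2 (by norm_num)
    have k0 : g (2 * c - c) = g c := by rw [show 2 * c - c = c by ring]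
    have k1 : iteratedDeriv 1 (fun s => g (2 * c - s)) c = -deriv g c := by
      rw [key 1 c, show 2 * c - c = c by ring, iteratedDeriv_one]; ring
    have k2 : iteratedDeriv 2 (fun s => g (2 * c - s)) c = iteratedDeriv 2 g c := by
      rw [key 2 c, show 2 * c - c = c by ring]; norm_num
    have hT : taylorWithinEval (fun s => g (2 * c - s)) 2 (Set.Icc c (2 * c - ξ)) c (2 * c - ξ)
        = g c + deriv g c * (ξ - c) + iteratedDeriv 2 g c / 2 * (ξ - c) ^ 2 := by
      rw [show (2 : ℕ) = 1 + 1 from rfl, taylorWithinEval_succ, taylorWithinEval_succ,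
        taylor_within_zero_eval, e1, e2, k0, k1, k2]
      simp [smul_eq_mul, Nat.factorial]
      ring
    have hfξ' : g (2 * c - (2 * c - ξ)) = g ξ := by rw [show 2 * c - (2 * c - ξ) = ξ by ring]
    rw [hT, hfξ'] at hEq
    rw [hEq]
    have hx'r : 2 * c - x' ∈ Set.Ioo a b := ⟨by linarith [hx'.2], by linarith [hx'.1]⟩
    have hrem : |iteratedDerivWithin 3 (fun s => g (2 * c - s)) (Set.Icc c (2 * c - ξ)) x'| ≤ M := by
      rw [idw_nhds (Icc_mem_nhds hx'.1 hx'.2), key, abs_mul, abs_pow, abs_neg, abs_one,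
        one_pow, one_mul]
      exact hM3 _ hx'r
    have habs : |2 * c - ξ - c| = |ξ - c| := by
      rw [show 2 * c - ξ - c = -(ξ - c) by ring, abs_neg]
    rw [abs_div, abs_mul, abs_pow, habs]
    have h6 : |((Nat.factorial (2 + 1) : ℕ) : ℝ)| = 6 := by norm_num [Nat.factorial]
    rw [h6]
    gcongr
  · subst heq
    simp
  · -- direct case c < ξ
    have h2 : ContDiffOn ℝ 2 g (Set.Icc c ξ) :=
      (hg.of_le (by norm_num)).mono (Set.Icc_subset_Icc hac.le hξ2)
    have hf' : DifferentiableOn ℝ (iteratedDerivWithin 2 g (Set.Icc c ξ)) (Set.Ioo c ξ) := by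
      intro y hy
      have hyab : y ∈ Set.Ioo a b := ⟨hac.trans hy.1, lt_of_lt_of_le hy.2 hξ2⟩
      have h1 := diffAt_iter (hCA y hyab) 2 (by norm_num)
      refine (h1.congr_of_eventuallyEq ?_).differentiableWithinAt
      filter_upwards [Ioo_mem_nhds hy.1 hy.2] with z hz
      exact idw_nhds (Icc_mem_nhds hz.1 hz.2)
    obtain ⟨x', hx', hEq⟩ := taylor_mean_remainder_lagrange (n := 2) hgt.ne
      (by rw [Set.uIcc_of_le hgt.le]; exact_mod_cast h2)
      (by rw [Set.uIcc_of_le hgt.le, Set.uIoo_of_le hgt.le]; exact hf')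
    rw [Set.uIcc_of_le hgt.le] at hEq
    rw [Set.uIoo_of_le hgt.le] at hx'
    have hccd : ContDiffAt ℝ 3 g c := hCA c hc
    have e1 := idw_left hgt hccd 1 (by norm_num)
    have e2 := idw_left hgt hccd 2 (by norm_num)
    have hT : taylorWithinEval g 2 (Set.Icc c ξ) c ξ
        = g c + deriv g c * (ξ - c) + iteratedDeriv 2 g c / 2 * (ξ - c) ^ 2 := by
      rw [show (2 : ℕ) = 1 + 1 from rfl, taylorWithinEval_succ, taylorWithinEval_succ,
        taylor_within_zero_eval, e1, e2]
      simp [smul_eq_mul, Nat.factorial, iteratedDeriv_one]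
      ring
    rw [hT] at hEq
    rw [hEq]
    have hx'ab : x' ∈ Set.Ioo a b := ⟨hac.trans hx'.1, lt_of_lt_of_le hx'.2 hξ2⟩
    rw [abs_div, abs_mul, abs_pow]
    have h6 : |((Nat.factorial (2 + 1) : ℕ) : ℝ)| = 6 := by norm_num [Nat.factorial]
    rw [h6]
    have hrem : |iteratedDerivWithin 3 g (Set.Icc c ξ) x'| ≤ M := by
      rw [idw_nhds (Icc_mem_nhds hx'.1 hx'.2)]
      exact hM3 _ hx'ab
    gcongr

set_option maxHeartbeats 1000000

theorem weno3_linear_reconstruction_third_order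
    (h x : ℝ) (hh : 0 < h) (g : ℝ → ℝ) (M : ℝ)
    (hg : ContDiffOn ℝ 3 g (Set.Icc (x - 3 * h / 2) (x + 3 * h / 2)))
    (hM : ∀ y ∈ Set.Icc (x - 3 * h / 2) (x + 3 * h / 2),
      |iteratedDerivWithin 3 g (Set.Icc (x - 3 * h / 2) (x + 3 * h / 2)) y| ≤ M)
    (v : ℝ → ℝ)
    (hv : ∀ y : ℝ, v y = (1 / h) * ∫ ξ in (y - h / 2)..(y + h / 2), g ξ) :
    |(-(1 / 6) * v (x - h) + (5 / 6) * v x + (1 / 3) * v (x + h)) - g (x + h / 2)|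
      ≤ (1 / 6) * M * h ^ 3 := by
  have hM0 : 0 ≤ M := le_trans (abs_nonneg _) (hM (x + h / 2) ⟨by linarith, by linarith⟩)
  have hpt : ∀ ξ ∈ Set.Icc (x - 3 * h / 2) (x + 3 * h / 2),
      |g ξ - (g (x + h / 2) + deriv g (x + h / 2) * (ξ - (x + h / 2))
        + iteratedDeriv 2 g (x + h / 2) / 2 * (ξ - (x + h / 2)) ^ 2)|
        ≤ M * |ξ - (x + h / 2)| ^ 3 / 6 :=
    fun ξ hξ => taylor_pt (by linarith) (by linarith) hg hM hξ
  set D0 := g (x + h / 2) with hD0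
  set D1 := deriv g (x + h / 2) with hD1
  set D2 := iteratedDeriv 2 g (x + h / 2) with hD2
  have hPcont : Continuous (fun t : ℝ => D0 + D1 * (t - (x + h / 2))
      + D2 / 2 * (t - (x + h / 2)) ^ 2) := by fun_prop
  have hQ : ∀ t : ℝ, HasDerivAt (fun s : ℝ => D0 * s + D1 / 2 * (s - (x + h / 2)) ^ 2
      + D2 / 6 * (s - (x + h / 2)) ^ 3)
      (D0 + D1 * (t - (x + h / 2)) + D2 / 2 * (t - (x + h / 2)) ^ 2) t := by
    intro t
    have h1 : HasDerivAt (fun s : ℝ => s - (x + h / 2)) 1 t := (hasDerivAt_id t).sub_const _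
    have h0 := (hasDerivAt_id t).const_mul D0
    have h2 := (h1.pow 2).const_mul (D1 / 2)
    have h3 := (h1.pow 3).const_mul (D2 / 6)
    refine ((h0.add h2).add h3).congr_deriv ?_
    norm_num
    ring
  have cell : ∀ l r : ℝ, l ≤ r → x - 3 * h / 2 ≤ l → r ≤ x + 3 * h / 2 →
      (∫ t in l..r, g t) = ((D0 * r + D1 / 2 * (r - (x + h / 2)) ^ 2
          + D2 / 6 * (r - (x + h / 2)) ^ 3)
        - (D0 * l + D1 / 2 * (l - (x + h / 2)) ^ 2 + D2 / 6 * (l - (x + h / 2)) ^ 3))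
        + ∫ t in l..r, (g t - (D0 + D1 * (t - (x + h / 2))
            + D2 / 2 * (t - (x + h / 2)) ^ 2)) := by
    intro l r hlr hal hrb
    have hgi : IntervalIntegrable g volume l r :=
      (hg.continuousOn.mono (Set.Icc_subset_Icc hal hrb)).intervalIntegrable_of_Icc hlr
    have hPi : IntervalIntegrable (fun t : ℝ => D0 + D1 * (t - (x + h / 2))
        + D2 / 2 * (t - (x + h / 2)) ^ 2) volume l r := hPcont.intervalIntegrable l r
    have hsplit := intervalIntegral.integral_sub hgi hPi
    have hPval : (∫ t in l..r, (D0 + D1 * (t - (x + h / 2)) + D2 / 2 * (t - (x + h / 2)) ^ 2))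
        = (D0 * r + D1 / 2 * (r - (x + h / 2)) ^ 2 + D2 / 6 * (r - (x + h / 2)) ^ 3)
          - (D0 * l + D1 / 2 * (l - (x + h / 2)) ^ 2 + D2 / 6 * (l - (x + h / 2)) ^ 3) :=
      integral_eq_sub_of_hasDerivAt (fun t _ => hQ t) hPi
    rw [hPval] at hsplit
    linarith [hsplit]
  have bndL : ∀ l r : ℝ, l ≤ r → x - 3 * h / 2 ≤ l → r ≤ x + h / 2 →
      |∫ t in l..r, (g t - (D0 + D1 * (t - (x + h / 2)) + D2 / 2 * (t - (x + h / 2)) ^ 2))|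
        ≤ M / 24 * ((x + h / 2 - l) ^ 4 - (x + h / 2 - r) ^ 4) := by
    intro l r hlr hal hrc
    have hrb : r ≤ x + 3 * h / 2 := by linarith
    have hRcont : ContinuousOn (fun t : ℝ => g t - (D0 + D1 * (t - (x + h / 2))
        + D2 / 2 * (t - (x + h / 2)) ^ 2)) (Set.Icc l r) :=
      (hg.continuousOn.mono (Set.Icc_subset_Icc hal hrb)).sub hPcont.continuousOn
    have hBcont : Continuous (fun t : ℝ => M / 6 * (x + h / 2 - t) ^ 3) := by fun_prop
    have hA : ∀ t : ℝ, HasDerivAt (fun s : ℝ => -(M / 24) * (x + h / 2 - s) ^ 4)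
        (M / 6 * (x + h / 2 - t) ^ 3) t := by
      intro t
      have h1 : HasDerivAt (fun s : ℝ => x + h / 2 - s) (-1) t :=
        (hasDerivAt_id t).const_sub (x + h / 2)
      refine ((h1.pow 4).const_mul (-(M / 24))).congr_deriv ?_
      norm_num
      ring
    calc |∫ t in l..r, (g t - (D0 + D1 * (t - (x + h / 2)) + D2 / 2 * (t - (x + h / 2)) ^ 2))|
        ≤ ∫ t in l..r, |g t - (D0 + D1 * (t - (x + h / 2)) + D2 / 2 * (t - (x + h / 2)) ^ 2)| :=
          intervalIntegral.abs_integral_le_integral_abs hlr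
      _ ≤ ∫ t in l..r, M / 6 * (x + h / 2 - t) ^ 3 := by
          apply intervalIntegral.integral_mono_on hlr
            (hRcont.abs.intervalIntegrable_of_Icc hlr) (hBcont.intervalIntegrable l r)
          intro t ht
          have h1 := hpt t ⟨by linarith [ht.1], by linarith [ht.2]⟩
          have h2 : |t - (x + h / 2)| = x + h / 2 - t := by
            rw [abs_of_nonpos (by linarith [ht.2])]; ring
          rw [h2] at h1
          calc |g t - (D0 + D1 * (t - (x + h / 2)) + D2 / 2 * (t - (x + h / 2)) ^ 2)|
              ≤ M * (x + h / 2 - t) ^ 3 / 6 := h1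
            _ = M / 6 * (x + h / 2 - t) ^ 3 := by ring
      _ = M / 24 * ((x + h / 2 - l) ^ 4 - (x + h / 2 - r) ^ 4) := by
          rw [integral_eq_sub_of_hasDerivAt (fun t _ => hA t) (hBcont.intervalIntegrable l r)]
          ring
  have bndR : |∫ t in (x + h / 2)..(x + 3 * h / 2), (g t - (D0 + D1 * (t - (x + h / 2))
        + D2 / 2 * (t - (x + h / 2)) ^ 2))| ≤ M / 24 * h ^ 4 := by
    have hlr : x + h / 2 ≤ x + 3 * h / 2 := by linarith
    have hRcont : ContinuousOn (fun t : ℝ => g t - (D0 + D1 * (t - (x + h / 2))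
        + D2 / 2 * (t - (x + h / 2)) ^ 2)) (Set.Icc (x + h / 2) (x + 3 * h / 2)) :=
      (hg.continuousOn.mono (Set.Icc_subset_Icc (by linarith) le_rfl)).sub hPcont.continuousOn
    have hBcont : Continuous (fun t : ℝ => M / 6 * (t - (x + h / 2)) ^ 3) := by fun_prop
    have hA : ∀ t : ℝ, HasDerivAt (fun s : ℝ => M / 24 * (s - (x + h / 2)) ^ 4)
        (M / 6 * (t - (x + h / 2)) ^ 3) t := by
      intro t
      have h1 : HasDerivAt (fun s : ℝ => s - (x + h / 2)) 1 t := (hasDerivAt_id t).sub_const _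
      refine ((h1.pow 4).const_mul (M / 24)).congr_deriv ?_
      norm_num
      ring
    calc |∫ t in (x + h / 2)..(x + 3 * h / 2), (g t - (D0 + D1 * (t - (x + h / 2))
          + D2 / 2 * (t - (x + h / 2)) ^ 2))|
        ≤ ∫ t in (x + h / 2)..(x + 3 * h / 2),
            |g t - (D0 + D1 * (t - (x + h / 2)) + D2 / 2 * (t - (x + h / 2)) ^ 2)| :=
          intervalIntegral.abs_integral_le_integral_abs hlr
      _ ≤ ∫ t in (x + h / 2)..(x + 3 * h / 2), M / 6 * (t - (x + h / 2)) ^ 3 := by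
          apply intervalIntegral.integral_mono_on hlr
            (hRcont.abs.intervalIntegrable_of_Icc hlr)
            (hBcont.intervalIntegrable _ _)
          intro t ht
          have h1 := hpt t ⟨by linarith [ht.1], by linarith [ht.2]⟩
          have h2 : |t - (x + h / 2)| = t - (x + h / 2) := by
            rw [abs_of_nonneg (by linarith [ht.1])]
          rw [h2] at h1
          calc |g t - (D0 + D1 * (t - (x + h / 2)) + D2 / 2 * (t - (x + h / 2)) ^ 2)|
              ≤ M * (t - (x + h / 2)) ^ 3 / 6 := h1
            _ = M / 6 * (t - (x + h / 2)) ^ 3 := by ring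
      _ = M / 24 * h ^ 4 := by
          rw [integral_eq_sub_of_hasDerivAt (fun t _ => hA t) (hBcont.intervalIntegrable _ _)]
          ring
  have hI1 := cell (x - 3 * h / 2) (x - h / 2) (by linarith) (by linarith) (by linarith)
  have hI2 := cell (x - h / 2) (x + h / 2) (by linarith) (by linarith) (by linarith)
  have hI3 := cell (x + h / 2) (x + 3 * h / 2) (by linarith) (by linarith) (by linarith)
  have hB1 : |∫ t in (x - 3 * h / 2)..(x - h / 2), (g t - (D0 + D1 * (t - (x + h / 2))
        + D2 / 2 * (t - (x + h / 2)) ^ 2))| ≤ 15 / 24 * M * h ^ 4 :=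
    le_trans (bndL _ _ (by linarith) (by linarith) (by linarith)) (le_of_eq (by ring))
  have hB2 : |∫ t in (x - h / 2)..(x + h / 2), (g t - (D0 + D1 * (t - (x + h / 2))
        + D2 / 2 * (t - (x + h / 2)) ^ 2))| ≤ 1 / 24 * M * h ^ 4 :=
    le_trans (bndL _ _ (by linarith) (by linarith) (by linarith)) (le_of_eq (by ring))
  have hB3 : |∫ t in (x + h / 2)..(x + 3 * h / 2), (g t - (D0 + D1 * (t - (x + h / 2))
        + D2 / 2 * (t - (x + h / 2)) ^ 2))| ≤ 1 / 24 * M * h ^ 4 :=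
    le_trans bndR (le_of_eq (by ring))
  have hval : (-(1 / 6) * v (x - h) + (5 / 6) * v x + (1 / 3) * v (x + h)) - D0
      = (1 / h) * (-(1 / 6) * (∫ t in (x - 3 * h / 2)..(x - h / 2),
            (g t - (D0 + D1 * (t - (x + h / 2)) + D2 / 2 * (t - (x + h / 2)) ^ 2)))
        + (5 / 6) * (∫ t in (x - h / 2)..(x + h / 2),
            (g t - (D0 + D1 * (t - (x + h / 2)) + D2 / 2 * (t - (x + h / 2)) ^ 2)))
        + (1 / 3) * (∫ t in (x + h / 2)..(x + 3 * h / 2),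
            (g t - (D0 + D1 * (t - (x + h / 2)) + D2 / 2 * (t - (x + h / 2)) ^ 2)))) := by
    have hne : h ≠ 0 := ne_of_gt hh
    have hinv : 1 / h * h = 1 := one_div_mul_cancel hne
    have hAcomb : -(1 / 6) * ((D0 * (x - h / 2) + D1 / 2 * ((x - h / 2) - (x + h / 2)) ^ 2 + D2 / 6 * ((x - h / 2) - (x + h / 2)) ^ 3) - (D0 * (x - 3 * h / 2) + D1 / 2 * ((x - 3 * h / 2) - (x + h / 2)) ^ 2 + D2 / 6 * ((x - 3 * h / 2) - (x + h / 2)) ^ 3))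
        + (5 / 6) * ((D0 * (x + h / 2) + D1 / 2 * ((x + h / 2) - (x + h / 2)) ^ 2 + D2 / 6 * ((x + h / 2) - (x + h / 2)) ^ 3) - (D0 * (x - h / 2) + D1 / 2 * ((x - h / 2) - (x + h / 2)) ^ 2 + D2 / 6 * ((x - h / 2) - (x + h / 2)) ^ 3))
        + (1 / 3) * ((D0 * (x + 3 * h / 2) + D1 / 2 * ((x + 3 * h / 2) - (x + h / 2)) ^ 2 + D2 / 6 * ((x + 3 * h / 2) - (x + h / 2)) ^ 3) - (D0 * (x + h / 2) + D1 / 2 * ((x + h / 2) - (x + h / 2)) ^ 2 + D2 / 6 * ((x + h / 2) - (x + h / 2)) ^ 3)) = h * D0 := by ring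
    rw [hv, hv, hv, show x - h - h / 2 = x - 3 * h / 2 by ring,
      show x - h + h / 2 = x - h / 2 by ring, show x + h - h / 2 = x + h / 2 by ring,
      show x + h + h / 2 = x + 3 * h / 2 by ring, hI1, hI2, hI3]
    linear_combination (1 / h) * hAcomb + D0 * hinv
  rw [hval, abs_mul, abs_of_pos (show (0 : ℝ) < 1 / h by positivity)]
  have htri : |(-(1 / 6) * (∫ t in (x - 3 * h / 2)..(x - h / 2),
          (g t - (D0 + D1 * (t - (x + h / 2)) + D2 / 2 * (t - (x + h / 2)) ^ 2)))
      + (5 / 6) * (∫ t in (x - h / 2)..(x + h / 2),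
          (g t - (D0 + D1 * (t - (x + h / 2)) + D2 / 2 * (t - (x + h / 2)) ^ 2)))
      + (1 / 3) * (∫ t in (x + h / 2)..(x + 3 * h / 2),
          (g t - (D0 + D1 * (t - (x + h / 2)) + D2 / 2 * (t - (x + h / 2)) ^ 2))))|
      ≤ 11 / 72 * M * h ^ 4 := by
    calc _ ≤ |(-(1 / 6) * (∫ t in (x - 3 * h / 2)..(x - h / 2),
            (g t - (D0 + D1 * (t - (x + h / 2)) + D2 / 2 * (t - (x + h / 2)) ^ 2)))
          + (5 / 6) * (∫ t in (x - h / 2)..(x + h / 2),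
            (g t - (D0 + D1 * (t - (x + h / 2)) + D2 / 2 * (t - (x + h / 2)) ^ 2))))|
          + |(1 / 3) * (∫ t in (x + h / 2)..(x + 3 * h / 2),
            (g t - (D0 + D1 * (t - (x + h / 2)) + D2 / 2 * (t - (x + h / 2)) ^ 2)))| :=
        abs_add_le _ _
      _ ≤ |(-(1 / 6) * (∫ t in (x - 3 * h / 2)..(x - h / 2),
            (g t - (D0 + D1 * (t - (x + h / 2)) + D2 / 2 * (t - (x + h / 2)) ^ 2))))|
          + |(5 / 6) * (∫ t in (x - h / 2)..(x + h / 2),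
            (g t - (D0 + D1 * (t - (x + h / 2)) + D2 / 2 * (t - (x + h / 2)) ^ 2)))|
          + |(1 / 3) * (∫ t in (x + h / 2)..(x + 3 * h / 2),
            (g t - (D0 + D1 * (t - (x + h / 2)) + D2 / 2 * (t - (x + h / 2)) ^ 2)))| :=
        add_le_add_left (abs_add_le _ _) _
      _ ≤ 11 / 72 * M * h ^ 4 := by
        rw [abs_mul, abs_mul, abs_mul]
        have e1 : |(-(1 / 6) : ℝ)| = 1 / 6 := by norm_num
        have e2 : |((5 : ℝ) / 6)| = 5 / 6 := by norm_num
        have e3 : |((1 : ℝ) / 3)| = 1 / 3 := by norm_num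
        rw [e1, e2, e3]
        nlinarith [hB1, hB2, hB3]
  calc 1 / h * |(-(1 / 6) * (∫ t in (x - 3 * h / 2)..(x - h / 2),
          (g t - (D0 + D1 * (t - (x + h / 2)) + D2 / 2 * (t - (x + h / 2)) ^ 2)))
      + (5 / 6) * (∫ t in (x - h / 2)..(x + h / 2),
          (g t - (D0 + D1 * (t - (x + h / 2)) + D2 / 2 * (t - (x + h / 2)) ^ 2)))
      + (1 / 3) * (∫ t in (x + h / 2)..(x + 3 * h / 2),
          (g t - (D0 + D1 * (t - (x + h / 2)) + D2 / 2 * (t - (x + h / 2)) ^ 2))))|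
      ≤ 1 / h * (11 / 72 * M * h ^ 4) := by
        apply mul_le_mul_of_nonneg_left htri (by positivity)
    _ = 11 / 72 * M * h ^ 3 := by field_simp
    _ ≤ (1 / 6) * M * h ^ 3 := by nlinarith [pow_pos hh 3]
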